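/- The canonical Nambu bracket on the polynomial algebra F[x, y, z] (or smooth functions of three variables), defined by [f1, f2, f3] = det of the Jacobian matrix \partial(f1,f2,f3)/\partial(x,y,z), is a 3-Lie bracket: it is trilinear, totally skew-symmetric, and satisfies the generalized Jacobi identity [[f1,f2,f3], g2, g3] = [[f1,g2,g3], f2, f3] + [f1, [f2,g2,g3], f3] + [f1, f2, [f3,g2,g3]]. -/

import Mathlib

set_option maxHeartbeats 4000000

noncomputable section

open MvPolynomial

/-- Trilinearity of a ternary bracket. -/
def IsTrilinear (F : Type) {V : Type} [Field F] [AddCommGroup V] [Module F V]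
    (br : V → V → V → V) : Prop :=
  (∀ (a : F) (u u' v w : V), br (a • u + u') v w = a • br u v w + br u' v w) ∧
  (∀ (a : F) (u v v' w : V), br u (a • v + v') w = a • br u v w + br u v' w) ∧
  (∀ (a : F) (u v w w' : V), br u v (a • w + w') = a • br u v w + br u v w')

/-- Total skew-symmetry of a ternary bracket. -/
def IsSkew {V : Type} [AddCommGroup V] (br : V → V → V → V) : Prop :=
  ∀ u v w : V, br u v w = - br v u w ∧ br u v w = - br u w v

/-- The generalized Jacobi (Filippov) identity. -/
def Jacobi {V : Type} [AddCommGroup V] (br : V → V → V → V) : Prop :=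
  ∀ u1 u2 u3 v2 v3 : V, br (br u1 u2 u3) v2 v3 =
    br (br u1 v2 v3) u2 u3 + br u1 (br u2 v2 v3) u3 + br u1 u2 (br u3 v2 v3)

/-- The canonical Nambu bracket on `F[x,y,z]`: the Jacobian determinant. -/
def nambu {F : Type} [Field F] (f g h : MvPolynomial (Fin 3) F) :
    MvPolynomial (Fin 3) F :=
  Matrix.det
    !![MvPolynomial.pderiv 0 f, MvPolynomial.pderiv 1 f, MvPolynomial.pderiv 2 f;
       MvPolynomial.pderiv 0 g, MvPolynomial.pderiv 1 g, MvPolynomial.pderiv 2 g;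
       MvPolynomial.pderiv 0 h, MvPolynomial.pderiv 1 h, MvPolynomial.pderiv 2 h]

lemma pderiv_comm' {F : Type} [Field F] (i j : Fin 3) (f : MvPolynomial (Fin 3) F) :
    pderiv i (pderiv j f) = pderiv j (pderiv i f) := by
  rcases eq_or_ne i j with rfl | hij
  · rfl
  induction f using MvPolynomial.induction_on' with
  | monomial s a =>
      simp only [pderiv_monomial]
      rw [Finsupp.tsub_apply, Finsupp.tsub_apply, Finsupp.single_apply, Finsupp.single_apply,
        if_neg hij, if_neg hij.symm]
      rw [tsub_right_comm]; simp; ring_nf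
  | add p q hp hq => simp [hp, hq]

/-- the canonical Nambu bracket is a 3-Lie bracket. -/
theorem stmt10 (F : Type) [Field F] [CharZero F] :
    IsTrilinear F (nambu (F := F)) ∧ IsSkew (nambu (F := F)) ∧
      Jacobi (nambu (F := F)) := by
  refine ⟨⟨?_, ?_, ?_⟩, ?_, ?_⟩
  · intro a u u' v w
    simp only [nambu, Matrix.det_fin_three, Matrix.of_apply, Matrix.cons_val', Matrix.cons_val_zero,
      Matrix.cons_val_one, Matrix.head_cons, Matrix.head_fin_const, Matrix.cons_val_two,
      Matrix.tail_cons, map_add, pderiv_C_mul, map_smul, smul_eq_C_mul]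
    ring
  · intro a u v v' w
    simp only [nambu, Matrix.det_fin_three, Matrix.of_apply, Matrix.cons_val', Matrix.cons_val_zero,
      Matrix.cons_val_one, Matrix.head_cons, Matrix.head_fin_const, Matrix.cons_val_two,
      Matrix.tail_cons, map_add, pderiv_C_mul, map_smul, smul_eq_C_mul]
    ring
  · intro a u v w w'
    simp only [nambu, Matrix.det_fin_three, Matrix.of_apply, Matrix.cons_val', Matrix.cons_val_zero,
      Matrix.cons_val_one, Matrix.head_cons, Matrix.head_fin_const, Matrix.cons_val_two,
      Matrix.tail_cons, map_add, pderiv_C_mul, map_smul, smul_eq_C_mul]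
    ring
  · intro u v w
    constructor <;>
    · simp only [nambu, Matrix.det_fin_three, Matrix.of_apply, Matrix.cons_val',
        Matrix.cons_val_zero, Matrix.cons_val_one, Matrix.head_cons, Matrix.head_fin_const,
        Matrix.cons_val_two, Matrix.tail_cons]
      ring
  · intro u1 u2 u3 v2 v3
    simp only [nambu, Matrix.det_fin_three, Matrix.of_apply, Matrix.cons_val', Matrix.cons_val_zero,
      Matrix.cons_val_one, Matrix.head_cons, Matrix.head_fin_const, Matrix.cons_val_two,
      Matrix.tail_cons, map_add, map_sub, pderiv_mul]
    simp only [pderiv_comm' 1 0, pderiv_comm' 2 0, pderiv_comm' 2 1]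
    ring
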